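/- Let t and m be positive integers and let G be a finite group of order t·m. For each positive integer k, let χ_G(k) denote the number of elements of order k in G, and for each positive integer d let b_m(d) denote the binomial coefficient C(dm−1, d−1). Then the sum over all divisors d of t of b_m(d)·χ_G(t/d) is congruent to 0 modulo t. -/

import Mathlib

open scoped Classical Pointwise
open MulAction Finset

set_option linter.unusedSectionVars false
set_option linter.unusedTactic false

section burnsideAux
variable {G : Type*} [Group G] [Fintype G]

lemma fiber_card (g : G) (ω : orbitRel.Quotient (Subgroup.zpowers g) G) :
    (Finset.univ.filter fun x : G =>
      (Quotient.mk'' x : orbitRel.Quotient (Subgroup.zpowers g) G) = ω).card = orderOf g := by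
  classical
  rw [← Fintype.card_subtype]
  have e1 : {x : G // (Quotient.mk'' x : orbitRel.Quotient (Subgroup.zpowers g) G) = ω}
      ≃ ↥(MulAction.orbit (Subgroup.zpowers g) ω.out) :=
    Equiv.subtypeEquivRight fun x => by
      rw [← orbitRel.Quotient.mem_orbit, orbitRel.Quotient.orbit_eq_orbit_out ω Quotient.out_eq']
  have e2 : ↥(MulAction.orbit (Subgroup.zpowers g) ω.out) ≃ (Subgroup.zpowers g) := by
    refine (Equiv.ofBijective (fun h : (Subgroup.zpowers g) =>
      (⟨h • ω.out, MulAction.mem_orbit _ h⟩ : ↥(MulAction.orbit (Subgroup.zpowers g) ω.out)))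
      ⟨?_, ?_⟩).symm
    · intro h h' hh
      apply Subtype.ext
      have := Subtype.mk_eq_mk.mp hh
      rwa [Subgroup.smul_def, Subgroup.smul_def, smul_eq_mul, smul_eq_mul, mul_left_inj] at this
    · rintro ⟨x, hx⟩
      obtain ⟨h, hh⟩ := MulAction.mem_orbit_iff.mp hx
      exact ⟨h, Subtype.ext hh⟩
  rw [Fintype.card_congr (e1.trans e2), Fintype.card_zpowers]


lemma quot_card (g : G) :
    Fintype.card (orbitRel.Quotient (Subgroup.zpowers g) G) * orderOf g = Fintype.card G := by
  classical
  have := Finset.card_eq_sum_card_fiberwise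
    (f := fun x : G => (Quotient.mk'' x : orbitRel.Quotient (Subgroup.zpowers g) G))
    (s := Finset.univ) (t := Finset.univ) (fun x _ => Finset.mem_univ _)
  have h2 : Fintype.card G = (Finset.univ : Finset G).card := rfl
  rw [h2, this]
  simp only [fiber_card g, Finset.sum_const, smul_eq_mul, Finset.card_univ]


omit [Fintype G] in
omit [Fintype G] in
lemma smul_finset_eq_of_fixed {g : G} {S : Finset G} (hS : g • S = S)
    (h : (Subgroup.zpowers g : Subgroup G)) : (h : G) • S = S := by
  have hle : Subgroup.zpowers g ≤ MulAction.stabilizer G S :=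
    Subgroup.zpowers_le.mpr (by rwa [MulAction.mem_stabilizer_iff])
  exact hle h.2


omit [Fintype G] in
lemma mem_of_rel {g : G} {S : Finset G} (hS : g • S = S) {x y : G} (hy : y ∈ S)
    (hxy : (Quotient.mk'' x : orbitRel.Quotient (Subgroup.zpowers g) G) = Quotient.mk'' y) :
    x ∈ S := by
  have hrel : x ∈ MulAction.orbit (Subgroup.zpowers g) y := Quotient.eq''.mp hxy
  obtain ⟨h, rfl⟩ := MulAction.mem_orbit_iff.mp hrel
  rw [Subgroup.smul_def, ← smul_finset_eq_of_fixed hS h]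
  exact Finset.smul_mem_smul_finset hy


lemma fixed_card {g : G} {S : Finset G} (hS : g • S = S) :
    S.card = (S.image fun x : G =>
      (Quotient.mk'' x : orbitRel.Quotient (Subgroup.zpowers g) G)).card * orderOf g := by
  classical
  rw [Finset.card_eq_sum_card_fiberwise
    (f := fun x : G => (Quotient.mk'' x : orbitRel.Quotient (Subgroup.zpowers g) G))
    (t := S.image fun x => Quotient.mk'' x) (fun x hx => Finset.mem_image_of_mem _ hx)]
  rw [Finset.sum_congr rfl (fun ω hω => ?_), Finset.sum_const, smul_eq_mul]
  have : S.filter (fun x => (Quotient.mk'' x : orbitRel.Quotient (Subgroup.zpowers g) G) = ω)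
      = Finset.univ.filter fun x => (Quotient.mk'' x : _) = ω := by
    ext x
    simp only [Finset.mem_filter, Finset.mem_univ, true_and, and_iff_right_iff_imp]
    intro hx
    obtain ⟨y, hy, rfl⟩ := Finset.mem_image.mp hω
    exact mem_of_rel hS hy hx
  rw [this, fiber_card]


lemma count_fixed (g : G) {t : ℕ} (hd : orderOf g ∣ t) :
    Fintype.card {S : Finset G // S.card = t ∧ g • S = S}
      = (Fintype.card G / orderOf g).choose (t / orderOf g) := by
  classical
  have hk : 0 < orderOf g := orderOf_pos g
  set k := orderOf g with hkdef
  set Q := orbitRel.Quotient (Subgroup.zpowers g) G with hQ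
  have filter_card : ∀ T : Finset Q,
      (Finset.univ.filter fun x : G => (Quotient.mk'' x : Q) ∈ T).card = T.card * k := by
    intro T
    rw [Finset.card_eq_sum_card_fiberwise
      (f := fun x : G => (Quotient.mk'' x : Q)) (t := T)
      (s := Finset.univ.filter fun x : G => (Quotient.mk'' x : Q) ∈ T)
      (fun x hx => (Finset.mem_filter.mp hx).2)]
    rw [Finset.sum_congr rfl (fun ω hω => ?_), Finset.sum_const, smul_eq_mul]
    have : (Finset.univ.filter fun x : G => (Quotient.mk'' x : Q) ∈ T).filter
        (fun x => (Quotient.mk'' x : Q) = ω) = Finset.univ.filter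
          fun x : G => (Quotient.mk'' x : Q) = ω := by
      ext x
      simp only [Finset.mem_filter, Finset.mem_univ, true_and]
      exact ⟨fun h => h.2, fun h => ⟨h ▸ hω, h⟩⟩
    rw [this, fiber_card]
  have e : {S : Finset G // S.card = t ∧ g • S = S} ≃ {T : Finset Q // T.card = t / k} := by
    refine ⟨fun S => ⟨S.1.image fun x => (Quotient.mk'' x : Q), ?_⟩,
      fun T => ⟨Finset.univ.filter fun x : G => (Quotient.mk'' x : Q) ∈ T.1, ?_, ?_⟩, ?_, ?_⟩
    · obtain ⟨S, hc, hfix⟩ := S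
      have := fixed_card hfix
      rw [hc] at this
      simp only
      rw [this]
      exact (Nat.mul_div_cancel _ hk).symm
    · rw [filter_card, T.2, Nat.div_mul_cancel hd]
    · ext x
      rw [Finset.mem_smul_finset]
      constructor
      · rintro ⟨y, hy, rfl⟩
        simp only [Finset.mem_filter, Finset.mem_univ, true_and] at hy ⊢
        have : (Quotient.mk'' (g • y) : Q) = Quotient.mk'' y :=
          Quotient.eq''.mpr ⟨⟨g, Subgroup.mem_zpowers g⟩, rfl⟩
        rwa [this]
      · intro hx
        refine ⟨g⁻¹ • x, ?_, by simp⟩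
        simp only [Finset.mem_filter, Finset.mem_univ, true_and] at hx ⊢
        have : (Quotient.mk'' (g⁻¹ • x) : Q) = Quotient.mk'' x :=
          Quotient.eq''.mpr ⟨⟨g⁻¹, Subgroup.inv_mem _ (Subgroup.mem_zpowers g)⟩, rfl⟩
        rwa [this]
    · rintro ⟨S, hc, hfix⟩
      apply Subtype.ext
      simp only
      ext x
      simp only [Finset.mem_filter, Finset.mem_univ, true_and, Finset.mem_image]
      constructor
      · rintro ⟨y, hy, hxy⟩
        exact mem_of_rel hfix hy hxy.symm
      · intro hx
        exact ⟨x, hx, rfl⟩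
    · rintro ⟨T, hT⟩
      apply Subtype.ext
      simp only
      ext ω
      simp only [Finset.mem_image, Finset.mem_filter, Finset.mem_univ, true_and]
      constructor
      · rintro ⟨y, hy, rfl⟩
        exact hy
      · intro hω
        exact ⟨ω.out, by rwa [Quotient.mk''_eq_mk, Quotient.out_eq], by
          rw [Quotient.mk''_eq_mk, Quotient.out_eq]⟩
    done
  rw [Fintype.card_congr e, Fintype.card_finset_len]
  congr 1
  rw [← quot_card g]
  exact (Nat.mul_div_cancel _ hk).symm

/-- no fixed `t`-subsets when `orderOf g ∤ t`. -/

lemma count_fixed_zero (g : G) {t : ℕ} (hd : ¬ orderOf g ∣ t) :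
    Fintype.card {S : Finset G // S.card = t ∧ g • S = S} = 0 := by
  classical
  rw [Fintype.card_eq_zero_iff]
  refine ⟨fun S => ?_⟩
  obtain ⟨S, hc, hfix⟩ := S
  exact hd ⟨_, by rw [← hc, fixed_card hfix, mul_comm]⟩


noncomputable instance sizedAction (t : ℕ) : MulAction G {S : Finset G // S.card = t} where
  smul a S := ⟨a • S.1, by rw [Finset.card_smul_finset]; exact S.2⟩
  one_smul S := Subtype.ext (one_smul G S.1)
  mul_smul a b S := Subtype.ext (mul_smul a b S.1)


omit [Fintype G] in
lemma sized_smul_def (t : ℕ) (a : G) (S : {S : Finset G // S.card = t}) :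
    (a • S).1 = a • S.1 := rfl


lemma card_fixedBy_eq (t : ℕ) (g : G) :
    Fintype.card (MulAction.fixedBy {S : Finset G // S.card = t} g)
      = Fintype.card {S : Finset G // S.card = t ∧ g • S = S} := by
  classical
  exact Fintype.card_congr
    ⟨fun S => ⟨S.1.1, S.1.2, congrArg Subtype.val S.2⟩,
     fun S => ⟨⟨S.1, S.2.1⟩, Subtype.ext S.2.2⟩, fun S => rfl, fun S => rfl⟩


lemma burnside (t : ℕ) :
    ∑ g : G, Fintype.card {S : Finset G // S.card = t ∧ g • S = S}
      = Fintype.card (orbitRel.Quotient G {S : Finset G // S.card = t}) * Fintype.card G := by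
  classical
  rw [← MulAction.sum_card_fixedBy_eq_card_orbits_mul_card_group G {S : Finset G // S.card = t}]
  exact Finset.sum_congr rfl fun g _ => (card_fixedBy_eq t g).symm


end burnsideAux

/-- For positive integers `t, m` and a finite group `G` of order `t * m`,
`∑_{d ∣ t} C(dm-1, d-1) * χ_G(t/d) ≡ 0 (mod t)`, where `χ_G(k)` is the number of
elements of order `k` in `G`. -/
theorem stmt0 (t m : ℕ) (ht : 0 < t) (hm : 0 < m) (G : Type*) [Group G] [Fintype G]
    (hG : Fintype.card G = t * m) :
    t ∣ ∑ d ∈ t.divisors,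
      (d * m - 1).choose (d - 1) *
        (Finset.univ.filter fun g : G => orderOf g = t / d).card := by
  classical
  set χ : ℕ → ℕ := fun k => (Finset.univ.filter fun g : G => orderOf g = k).card with hχ
  set Ssum : ℕ := ∑ d ∈ t.divisors, (d * m - 1).choose (d - 1) * χ (t / d) with hSsum
  set N : ℕ := Fintype.card (orbitRel.Quotient G {S : Finset G // S.card = t}) with hN
  set F : ℕ → ℕ := fun k => if k ∣ t then ((t * m) / k).choose (t / k) else 0 with hF
  have step1 : ∑ g : G, F (orderOf g) = N * (t * m) := by
    rw [← hG, ← burnside t]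
    refine Finset.sum_congr rfl fun g _ => ?_
    by_cases h : orderOf g ∣ t
    · rw [hF]; simp only [if_pos h, ← hG]; exact (count_fixed g h).symm
    · rw [hF]; simp only [if_neg h]; exact (count_fixed_zero g h).symm
  have step2 : ∑ g : G, F (orderOf g) = ∑ k ∈ (t * m).divisors, χ k * F k := by
    rw [← Finset.sum_fiberwise_of_maps_to' (g := fun g : G => orderOf g)
      (t := (t * m).divisors) (fun g _ => Nat.mem_divisors.mpr
        ⟨hG ▸ orderOf_dvd_card, by positivity⟩) F]
    refine Finset.sum_congr rfl fun k _ => ?_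
    rw [Finset.sum_const, smul_eq_mul, hχ]
  have step3 : ∑ k ∈ (t * m).divisors, χ k * F k
      = ∑ k ∈ t.divisors, χ k * ((t * m) / k).choose (t / k) := by
    rw [← Finset.sum_subset (Nat.divisors_subset_of_dvd (by positivity) ⟨m, rfl⟩)
      (fun k _ hk => ?_)]
    · refine Finset.sum_congr rfl fun k hk => ?_
      rw [hF]
      simp only [if_pos (Nat.mem_divisors.mp hk).1]
    · rw [hF]
      simp only
      rw [if_neg fun h => hk (Nat.mem_divisors.mpr ⟨h, ht.ne'⟩), mul_zero]
  have step4 : ∑ k ∈ t.divisors, χ k * ((t * m) / k).choose (t / k) = m * Ssum := by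
    rw [← Nat.sum_div_divisors t (fun k => χ k * ((t * m) / k).choose (t / k)), hSsum,
      Finset.mul_sum]
    refine Finset.sum_congr rfl fun d hd => ?_
    obtain ⟨hdvd, -⟩ := Nat.mem_divisors.mp hd
    have hd0 : 0 < d := Nat.pos_of_dvd_of_pos hdvd ht
    have htd0 : 0 < t / d := Nat.div_pos (Nat.le_of_dvd ht hdvd) hd0
    have e1 : t / (t / d) = d := Nat.div_div_self hdvd ht.ne'
    have e2 : t * m / (t / d) = d * m := by
      have : t * m = (t / d) * (d * m) := by
        rw [← mul_assoc, Nat.div_mul_cancel hdvd]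
      rw [this, Nat.mul_div_cancel_left _ htd0]
    have h1 : d * m - 1 + 1 = d * m := Nat.succ_pred_eq_of_pos (Nat.mul_pos hd0 hm)
    have h2 : d - 1 + 1 = d := Nat.succ_pred_eq_of_pos hd0
    have h3 := Nat.add_one_mul_choose_eq (d * m - 1) (d - 1)
    simp only [Nat.succ_eq_add_one, h1, h2] at h3
    have e3 : (d * m).choose d = m * (d * m - 1).choose (d - 1) := by
      apply Nat.eq_of_mul_eq_mul_left hd0
      calc d * (d * m).choose d = (d * m).choose d * d := mul_comm _ _
      _ = d * m * (d * m - 1).choose (d - 1) := h3.symm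
      _ = d * (m * (d * m - 1).choose (d - 1)) := by ring
    rw [e1, e2, e3]; ring
  have final : Ssum * m = (N * t) * m := by
    have : m * Ssum = N * (t * m) := by rw [← step4, ← step3, ← step2, step1]
    calc Ssum * m = m * Ssum := mul_comm _ _
    _ = N * (t * m) := this
    _ = (N * t) * m := by ring
  exact ⟨N, by rw [Nat.eq_of_mul_eq_mul_right hm final, mul_comm]⟩
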